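/- Scal∘Triv is a proper subset of Scal∘Poi, and both Scal∘Poi and Scal∘Triv are groups under composition of functions. -/
import Mathlib


/-- Spacetime points: elements of ℝ⁴. -/
abbrev Pt : Type := Fin 4 → ℝ

/-- Lightlike relatedness λ. -/
def lightlike (p q : Pt) : Prop :=
  (p 0 - q 0) ^ 2 = (p 1 - q 1) ^ 2 + (p 2 - q 2) ^ 2 + (p 3 - q 3) ^ 2

/-- Absolute simultaneity S. -/
def simul (p q : Pt) : Prop := p 0 = q 0

/-- Squared Minkowski length. -/
def sqMink (p : Pt) : ℝ := p 0 ^ 2 - p 1 ^ 2 - p 2 ^ 2 - p 3 ^ 2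

/-- Squared Euclidean length. -/
def sqEucl (p : Pt) : ℝ := p 0 ^ 2 + p 1 ^ 2 + p 2 ^ 2 + p 3 ^ 2

/-- Translations of ℝ⁴. -/
def IsTranslation (τ : Pt → Pt) : Prop := ∃ b : Pt, ∀ p, τ p = p + b

/-- Lorentz transformations: bijective linear maps preserving squared Minkowski length. -/
def IsLorentz (L : Pt → Pt) : Prop :=
  IsLinearMap ℝ L ∧ Function.Bijective L ∧ ∀ p, sqMink (L p) = sqMink p

/-- Poincaré transformations: translations composed with Lorentz transformations. -/
def IsPoincare (P : Pt → Pt) : Prop :=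
  ∃ τ L, IsTranslation τ ∧ IsLorentz L ∧ P = τ ∘ L

/-- Euclidean isometries: translations composed with bijective linear maps preserving
squared Euclidean length. -/
def IsEuclIsom (A : Pt → Pt) : Prop :=
  ∃ τ L, IsTranslation τ ∧ IsLinearMap ℝ L ∧ Function.Bijective L ∧
    (∀ p, sqEucl (L p) = sqEucl p) ∧ A = τ ∘ L

/-- Vertical lines: lines parallel to the time axis. -/
def IsVerticalLine (ℓ : Set Pt) : Prop :=
  ∃ q : Pt, ℓ = {p | p 1 = q 1 ∧ p 2 = q 2 ∧ p 3 = q 3}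

/-- Trivial transformations: Euclidean isometries taking vertical lines to vertical lines. -/
def IsTrivial (A : Pt → Pt) : Prop :=
  IsEuclIsom A ∧ ∀ ℓ, IsVerticalLine ℓ → IsVerticalLine (A '' ℓ)

/-- Scalings: maps `p ↦ a • p` with `a ≠ 0`. -/
def IsScaling (D : Pt → Pt) : Prop := ∃ a : ℝ, a ≠ 0 ∧ ∀ p, D p = a • p

/-- The point (1,0,0,0). -/
def unitTime : Pt := fun i => if i = 0 then 1 else 0

/-- Orthochronous maps: maps not changing the direction of time. -/
def Orthochronous (A : Pt → Pt) : Prop := A unitTime 0 > A 0 0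

/-- The set of Poincaré transformations. -/
def Poi : Set (Pt → Pt) := {P | IsPoincare P}

/-- The set of orthochronous Poincaré transformations. -/
def PoiUp : Set (Pt → Pt) := {P | IsPoincare P ∧ Orthochronous P}

/-- The set of trivial transformations. -/
def Triv : Set (Pt → Pt) := {T | IsTrivial T}

/-- The set of orthochronous trivial transformations. -/
def TrivUp : Set (Pt → Pt) := {T | IsTrivial T ∧ Orthochronous T}

/-- The set of scalings. -/
def Scal : Set (Pt → Pt) := {D | IsScaling D}

/-- Composition of two sets of functions: `H ∘ G = {h ∘ g : h ∈ H, g ∈ G}`. -/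
def setComp (H G : Set (Pt → Pt)) : Set (Pt → Pt) := {f | ∃ h ∈ H, ∃ g ∈ G, f = h ∘ g}

/-- A set of functions forms a group under composition. -/
def IsCompGroup (G : Set (Pt → Pt)) : Prop :=
  id ∈ G ∧ (∀ f ∈ G, ∀ g ∈ G, f ∘ g ∈ G) ∧
    ∀ f ∈ G, ∃ g ∈ G, f ∘ g = id ∧ g ∘ f = id

/-! ### Auxiliary development -/

/-- Good linear maps: linear parts of trivial transformations. -/
def Good (L : Pt → Pt) : Prop :=
  IsLinearMap ℝ L ∧ Function.Bijective L ∧ (∀ p, sqEucl (L p) = sqEucl p) ∧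
    L unitTime 1 = 0 ∧ L unitTime 2 = 0 ∧ L unitTime 3 = 0

lemma unitTime_apply : unitTime 0 = 1 ∧ unitTime 1 = 0 ∧ unitTime 2 = 0 ∧ unitTime 3 = 0 := by
  refine ⟨rfl, ?_, ?_, ?_⟩ <;> simp [unitTime]

lemma good_c {L : Pt → Pt} (h : Good L) :
    ∃ c : ℝ, c ^ 2 = 1 ∧ L unitTime = c • unitTime := by
  obtain ⟨hlin, hbij, heu, h1, h2, h3⟩ := h
  refine ⟨L unitTime 0, ?_, ?_⟩
  · have := heu unitTime
    unfold sqEucl at this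
    rw [h1, h2, h3, unitTime_apply.1, unitTime_apply.2.1, unitTime_apply.2.2.1,
      unitTime_apply.2.2.2] at this
    linarith
  · funext i
    fin_cases i
    · simp [unitTime]
    · simp [unitTime, h1]
    · simp [unitTime, h2]
    · simp [unitTime, h3]

lemma good_time {L : Pt → Pt} (h : Good L) {c : ℝ} (hc : c ^ 2 = 1)
    (hcu : L unitTime = c • unitTime) (p : Pt) : L p 0 = c * p 0 := by
  have e1 : sqEucl (L p + c • unitTime) = sqEucl (p + unitTime) := by
    rw [← hcu, ← h.1.map_add]; exact h.2.2.1 _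
  have e2 := h.2.2.1 p
  unfold sqEucl at e1 e2
  simp only [Pi.add_apply, Pi.smul_apply, smul_eq_mul] at e1
  rw [unitTime_apply.1, unitTime_apply.2.1, unitTime_apply.2.2.1,
    unitTime_apply.2.2.2] at e1
  linear_combination (c/2) * e1 - (c/2) * e2 - (L p 0 + c/2) * hc

lemma good_lorentz {L : Pt → Pt} (h : Good L) : IsLorentz L := by
  refine ⟨h.1, h.2.1, fun p => ?_⟩
  obtain ⟨c, hc, hcu⟩ := good_c h
  have ht := good_time h hc hcu p
  have he := h.2.2.1 p
  unfold sqEucl at he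
  unfold sqMink
  have ht2 : L p 0 ^ 2 = p 0 ^ 2 := by
    linear_combination (L p 0 + c * p 0) * ht + (p 0) ^ 2 * hc
  linarith [ht2, he]

lemma lin_inv {L : Pt → Pt} (hlin : IsLinearMap ℝ L) (hbij : Function.Bijective L) :
    ∃ M : Pt → Pt, IsLinearMap ℝ M ∧ Function.Bijective M ∧
      (∀ p, L (M p) = p) ∧ ∀ p, M (L p) = p := by
  let E := LinearEquiv.ofBijective (IsLinearMap.mk' L hlin) hbij
  refine ⟨E.symm, ⟨fun x y => map_add _ _ _, fun c x => map_smul _ _ _⟩, E.symm.bijective,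
    fun p => E.apply_symm_apply p, fun p => E.symm_apply_apply p⟩

lemma lorentz_id : IsLorentz (id : Pt → Pt) :=
  ⟨⟨fun _ _ => rfl, fun _ _ => rfl⟩, Function.bijective_id, fun _ => rfl⟩

lemma lorentz_comp {L L' : Pt → Pt} (h : IsLorentz L) (h' : IsLorentz L') :
    IsLorentz (L ∘ L') := by
  refine ⟨⟨fun x y => ?_, fun c x => ?_⟩, h.2.1.comp h'.2.1, fun p => ?_⟩
  · simp [Function.comp, h'.1.map_add, h.1.map_add]
  · simp [Function.comp, h'.1.map_smul, h.1.map_smul]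
  · simp [Function.comp, h.2.2, h'.2.2]

lemma lorentz_inv {L : Pt → Pt} (h : IsLorentz L) :
    ∃ M, IsLorentz M ∧ (∀ p, L (M p) = p) ∧ ∀ p, M (L p) = p := by
  obtain ⟨M, hMlin, hMbij, hLM, hML⟩ := lin_inv h.1 h.2.1
  refine ⟨M, ⟨hMlin, hMbij, fun p => ?_⟩, hLM, hML⟩
  have := h.2.2 (M p)
  rw [hLM] at this
  exact this.symm

lemma good_id : Good (id : Pt → Pt) := by
  refine ⟨⟨fun _ _ => rfl, fun _ _ => rfl⟩, Function.bijective_id, fun _ => rfl, ?_, ?_, ?_⟩ <;>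
    simp [unitTime]

lemma good_comp {L L' : Pt → Pt} (h : Good L) (h' : Good L') : Good (L ∘ L') := by
  obtain ⟨c, hc, hcu⟩ := good_c h
  obtain ⟨c', hc', hcu'⟩ := good_c h'
  refine ⟨⟨fun x y => ?_, fun a x => ?_⟩, h.2.1.comp h'.2.1, fun p => ?_, ?_, ?_, ?_⟩
  · simp [Function.comp, h'.1.map_add, h.1.map_add]
  · simp [Function.comp, h'.1.map_smul, h.1.map_smul]
  · simp [Function.comp, h.2.2.1, h'.2.2.1]
  · show L (L' unitTime) 1 = 0
    rw [hcu', h.1.map_smul, hcu]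
    simp [unitTime]
  · show L (L' unitTime) 2 = 0
    rw [hcu', h.1.map_smul, hcu]
    simp [unitTime]
  · show L (L' unitTime) 3 = 0
    rw [hcu', h.1.map_smul, hcu]
    simp [unitTime]

lemma good_inv {L : Pt → Pt} (h : Good L) :
    ∃ M, Good M ∧ (∀ p, L (M p) = p) ∧ ∀ p, M (L p) = p := by
  obtain ⟨c, hc, hcu⟩ := good_c h
  obtain ⟨M, hMlin, hMbij, hLM, hML⟩ := lin_inv h.1 h.2.1
  have hMu : M unitTime = c • unitTime := by
    have : L (c • unitTime) = unitTime := by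
      rw [h.1.map_smul, hcu, smul_smul]
      rw [show c * c = 1 by nlinarith [hc]]
      simp
    calc M unitTime = M (L (c • unitTime)) := by rw [this]
      _ = c • unitTime := hML _
  refine ⟨M, ⟨hMlin, hMbij, fun p => ?_, ?_, ?_, ?_⟩, hLM, hML⟩
  · have := h.2.2.1 (M p); rw [hLM] at this; exact this.symm
  · rw [hMu]; simp [unitTime]
  · rw [hMu]; simp [unitTime]
  · rw [hMu]; simp [unitTime]

/-- Normal form of elements of `Scal∘Poi`. -/
lemma mem_SP (f : Pt → Pt) :
    f ∈ setComp Scal Poi ↔ ∃ (a : ℝ) (L : Pt → Pt) (b : Pt), a ≠ 0 ∧ IsLorentz L ∧ ∀ p : Pt, f p = a • L p + b := by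
  constructor
  · rintro ⟨D, ⟨a, ha, hD⟩, P, ⟨τ, L, ⟨b, hτ⟩, hL, rfl⟩, rfl⟩
    refine ⟨a, L, a • b, ha, hL, fun p => ?_⟩
    simp [Function.comp, hD, hτ, smul_add]
  · rintro ⟨a, L, b, ha, hL, hf⟩
    refine ⟨fun p => a • p, ⟨a, ha, fun _ => rfl⟩, fun p => L p + a⁻¹ • b,
      ⟨fun p => p + a⁻¹ • b, L, ⟨a⁻¹ • b, fun _ => rfl⟩, hL, rfl⟩, ?_⟩
    funext p
    simp only [Function.comp_apply, hf, smul_add, smul_smul, mul_inv_cancel₀ ha, one_smul]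

/-- A map of the form `p ↦ L p + b` with `Good L` is trivial. -/
lemma form_trivial {L : Pt → Pt} (b : Pt) (hL : Good L) :
    IsTrivial (fun p => L p + b) := by
  obtain ⟨c, hc, hcu⟩ := good_c hL
  have hcne : c ≠ 0 := by intro h; rw [h] at hc; norm_num at hc
  constructor
  · exact ⟨fun p => p + b, L, ⟨b, fun _ => rfl⟩, hL.1, hL.2.1, hL.2.2.1, rfl⟩
  · rintro ℓ ⟨q, rfl⟩
    refine ⟨L q + b, ?_⟩
    ext p'
    simp only [Set.mem_image, Set.mem_setOf_eq]
    constructor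
    · rintro ⟨p, ⟨h1, h2, h3⟩, rfl⟩
      have hp : p = q + (p 0 - q 0) • unitTime := by
        funext i
        fin_cases i <;> simp [unitTime, h1, h2, h3]
      have hp' : L p = L q + ((p 0 - q 0) * c) • unitTime := by
        conv_lhs => rw [hp]
        rw [hL.1.map_add, hL.1.map_smul, hcu, smul_smul]
      refine ⟨?_, ?_, ?_⟩ <;>
        simp [hp', Pi.add_apply, Pi.smul_apply, unitTime]
    · rintro ⟨h1, h2, h3⟩
      refine ⟨q + ((p' 0 - (L q + b) 0) / c) • unitTime, ⟨?_, ?_, ?_⟩, ?_⟩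
      · simp [unitTime]
      · simp [unitTime]
      · simp [unitTime]
      · have hLq : L (q + ((p' 0 - (L q + b) 0) / c) • unitTime)
            = L q + ((p' 0 - (L q + b) 0) / c * c) • unitTime := by
          rw [hL.1.map_add, hL.1.map_smul, hcu, smul_smul]
        rw [hLq]
        funext i
        fin_cases i
        · simp only [Pi.add_apply, Pi.smul_apply, smul_eq_mul]
          rw [div_mul_cancel₀ _ hcne]
          simp [unitTime, Pi.add_apply]
          ring
        · simpa [unitTime] using h1.symm
        · simpa [unitTime] using h2.symm
        · simpa [unitTime] using h3.symm

/-- Trivial transformations have a normal form with a Good linear part. -/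
lemma trivial_form {A : Pt → Pt} (h : IsTrivial A) :
    ∃ L b, Good L ∧ ∀ p, A p = L p + b := by
  obtain ⟨⟨τ, L, ⟨b, hτ⟩, hlin, hbij, heu, rfl⟩, hvert⟩ := h
  have hA : ∀ p, (τ ∘ L) p = L p + b := fun p => by simp [Function.comp, hτ]
  obtain ⟨r, hr⟩ := hvert {p | p 1 = (0:Pt) 1 ∧ p 2 = (0:Pt) 2 ∧ p 3 = (0:Pt) 3} ⟨0, rfl⟩
  have h0 : (τ ∘ L) 0 ∈ {p : Pt | p 1 = r 1 ∧ p 2 = r 2 ∧ p 3 = r 3} := by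
    rw [← hr]
    exact ⟨0, ⟨rfl, rfl, rfl⟩, rfl⟩
  have hu : (τ ∘ L) unitTime ∈ {p : Pt | p 1 = r 1 ∧ p 2 = r 2 ∧ p 3 = r 3} := by
    rw [← hr]
    refine ⟨unitTime, ⟨?_, ?_, ?_⟩, rfl⟩ <;> simp [unitTime]
  rw [hA, hlin.map_zero, zero_add] at h0
  rw [hA] at hu
  simp only [Set.mem_setOf_eq, Pi.add_apply] at h0 hu
  refine ⟨L, b, ⟨hlin, hbij, heu, ?_, ?_, ?_⟩, hA⟩
  · have := hu.1; rw [← h0.1] at this; linarith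
  · have := hu.2.1; rw [← h0.2.1] at this; linarith
  · have := hu.2.2; rw [← h0.2.2] at this; linarith

/-- Normal form of elements of `Scal∘Triv`. -/
lemma mem_ST (f : Pt → Pt) :
    f ∈ setComp Scal Triv ↔ ∃ (a : ℝ) (L : Pt → Pt) (b : Pt), a ≠ 0 ∧ Good L ∧ ∀ p : Pt, f p = a • L p + b := by
  constructor
  · rintro ⟨D, ⟨a, ha, hD⟩, T, hT, rfl⟩
    obtain ⟨L, b, hG, hTp⟩ := trivial_form hT
    refine ⟨a, L, a • b, ha, hG, fun p => ?_⟩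
    simp [Function.comp, hD, hTp, smul_add]
  · rintro ⟨a, L, b, ha, hL, hf⟩
    refine ⟨fun p => a • p, ⟨a, ha, fun _ => rfl⟩, fun p => L p + a⁻¹ • b,
      form_trivial _ hL, ?_⟩
    funext p
    simp only [Function.comp_apply, hf, smul_add, smul_smul, mul_inv_cancel₀ ha, one_smul]

/-- Generic group lemma for sets of maps of the form `p ↦ a • L p + b`. -/
lemma group_of_form (S : Set (Pt → Pt)) (Q : (Pt → Pt) → Prop)
    (hmem : ∀ f, f ∈ S ↔ ∃ (a : ℝ) (L : Pt → Pt) (b : Pt), a ≠ 0 ∧ Q L ∧ ∀ p : Pt, f p = a • L p + b)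
    (hlin : ∀ L, Q L → IsLinearMap ℝ L)
    (hid : Q id)
    (hcomp : ∀ L L', Q L → Q L' → Q (L ∘ L'))
    (hinv : ∀ L, Q L → ∃ M, Q M ∧ (∀ p, L (M p) = p) ∧ ∀ p, M (L p) = p) :
    IsCompGroup S := by
  refine ⟨?_, ?_, ?_⟩
  · exact (hmem id).mpr ⟨1, id, 0, one_ne_zero, hid, fun p => by simp⟩
  · intro f hf g hg
    obtain ⟨a, L, b, ha, hQ, hfp⟩ := (hmem f).mp hf
    obtain ⟨a', L', b', ha', hQ', hgp⟩ := (hmem g).mp hg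
    refine (hmem _).mpr ⟨a * a', L ∘ L', a • L b' + b, mul_ne_zero ha ha',
      hcomp _ _ hQ hQ', fun p => ?_⟩
    simp only [Function.comp_apply, hfp, hgp]
    rw [(hlin L hQ).map_add, (hlin L hQ).map_smul, smul_add, smul_smul, add_assoc]
  · intro f hf
    obtain ⟨a, L, b, ha, hQ, hfp⟩ := (hmem f).mp hf
    obtain ⟨M, hM, hLM, hML⟩ := hinv L hQ
    refine ⟨fun p => a⁻¹ • M p + (-a⁻¹) • M b,
      (hmem _).mpr ⟨a⁻¹, M, (-a⁻¹) • M b, inv_ne_zero ha, hM, fun p => rfl⟩, ?_, ?_⟩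
    · funext p
      simp only [Function.comp_apply, hfp, id_eq]
      rw [(hlin L hQ).map_add, (hlin L hQ).map_smul, (hlin L hQ).map_smul, hLM, hLM,
        smul_add, smul_smul, smul_smul, mul_inv_cancel₀ ha, one_smul]
      rw [show a * -a⁻¹ = -1 by field_simp]
      simp
    · funext p
      simp only [Function.comp_apply, hfp, id_eq]
      rw [(hlin M hM).map_add, (hlin M hM).map_smul, hML, smul_add, smul_smul,
        inv_mul_cancel₀ ha, one_smul]
      rw [show (-a⁻¹) • M b = -(a⁻¹ • M b) from neg_smul a⁻¹ (M b)]
      abel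

/-- A standard Lorentz boost. -/
noncomputable def boost : Pt → Pt := fun p i =>
  match i with
  | 0 => (5 * p 0 + 3 * p 1) / 4
  | 1 => (3 * p 0 + 5 * p 1) / 4
  | 2 => p 2
  | 3 => p 3

/-- Inverse of the boost. -/
noncomputable def boostInv : Pt → Pt := fun p i =>
  match i with
  | 0 => (5 * p 0 - 3 * p 1) / 4
  | 1 => (-3 * p 0 + 5 * p 1) / 4
  | 2 => p 2
  | 3 => p 3

lemma boost_lorentz : IsLorentz boost := by
  refine ⟨⟨fun x y => ?_, fun c x => ?_⟩, ?_, fun p => ?_⟩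
  · funext i; fin_cases i <;> simp [boost, Pi.add_apply] <;> ring
  · funext i; fin_cases i <;> simp [boost, Pi.smul_apply, smul_eq_mul] <;> ring
  · refine Function.bijective_iff_has_inverse.mpr ⟨boostInv, fun p => ?_, fun p => ?_⟩
    · funext i; fin_cases i <;> simp [boost, boostInv] <;> ring
    · funext i; fin_cases i <;> simp [boost, boostInv] <;> ring
  · unfold sqMink boost; ring

/-- Scal∘Triv ⊊ Scal∘Poi, and both Scal∘Poi and Scal∘Triv form groups under
composition. -/
theorem scal_triv_ssubset_scal_poi_and_groups :
    setComp Scal Triv ⊂ setComp Scal Poi ∧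
      IsCompGroup (setComp Scal Poi) ∧ IsCompGroup (setComp Scal Triv) := by
  have hSP : IsCompGroup (setComp Scal Poi) :=
    group_of_form _ IsLorentz mem_SP (fun L h => h.1) lorentz_id (fun _ _ => lorentz_comp)
      (fun _ => lorentz_inv)
  have hST : IsCompGroup (setComp Scal Triv) :=
    group_of_form _ Good mem_ST (fun L h => h.1) good_id (fun _ _ => good_comp)
      (fun _ => good_inv)
  refine ⟨?_, hSP, hST⟩
  rw [Set.ssubset_def]
  constructor
  · intro f hf
    obtain ⟨a, L, b, ha, hG, hfp⟩ := (mem_ST f).mp hf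
    exact (mem_SP f).mpr ⟨a, L, b, ha, good_lorentz hG, hfp⟩
  · intro hsub
    have hbmem : boost ∈ setComp Scal Poi :=
      (mem_SP boost).mpr ⟨1, boost, 0, one_ne_zero, boost_lorentz, fun p => by simp⟩
    obtain ⟨a, L, b, ha, hG, hfp⟩ := (mem_ST boost).mp (hsub hbmem)
    have hb : b 1 = 0 := by
      have h0 := congrFun (hfp 0) 1
      rw [hG.1.map_zero] at h0
      simpa [boost] using h0.symm
    have hu := congrFun (hfp unitTime) 1
    rw [Pi.add_apply, Pi.smul_apply, hG.2.2.2.1, hb, smul_eq_mul, mul_zero, add_zero] at hu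
    simp [boost, unitTime] at hu
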